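/- Let K be a field and V a K-vector space. If an element x of the exterior algebra Λ(V) satisfies φ ⌟ x = 0 (left contraction / interior product by φ) for every linear functional φ in the dual space V*, then x is a scalar, i.e., x lies in the image of the structure map K → Λ(V). Equivalently, the Koszul derivation δ_V : Λ(V) → Λ(V) ⊗ V, the unique superderivation with δ_V(v) = 1 ⊗ v for all v ∈ V (given on any basis (e_i) with dual basis (e_i*) by δ_V(x) = Σ_i (e_i* ⌟ x) ⊗ e_i), has kernel exactly K·1, so δ_V is injective in positive degrees. -/

import Mathlib

open CliffordAlgebra

section Aux

variable {K : Type*} [Field K] {V : Type*} [AddCommGroup V] [Module K V]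

private lemma koszul_mul_ι (v : V) (w : CliffordAlgebra (0 : QuadraticForm K V)) :
    w * ι (0 : QuadraticForm K V) v = ι (0 : QuadraticForm K V) v * involute w := by
  induction w using CliffordAlgebra.induction with
  | algebraMap r =>
      rw [AlgHom.commutes, Algebra.commutes]
  | ι m =>
      have horth : (0 : QuadraticForm K V).IsOrtho m v := by
        simp [QuadraticMap.isOrtho_def]
      rw [involute_ι, ι_mul_ι_comm_of_isOrtho horth, mul_neg]
  | mul a b ha hb =>
      rw [mul_assoc, hb, ← mul_assoc, ha, map_mul, mul_assoc]
  | add a b ha hb =>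
      rw [add_mul, ha, hb, map_add, mul_add]

private lemma koszul_contract_mul (φ : Module.Dual K V)
    (a b : CliffordAlgebra (0 : QuadraticForm K V)) :
    contractLeft φ (a * b)
      = contractLeft φ a * b + involute a * contractLeft φ b := by
  induction a using CliffordAlgebra.induction generalizing b with
  | algebraMap r =>
      simp [contractLeft_algebraMap_mul, contractLeft_algebraMap, Algebra.smul_def]
  | ι m =>
      rw [contractLeft_ι_mul, contractLeft_ι, involute_ι, Algebra.smul_def, neg_mul,
        sub_eq_add_neg]
  | mul a₁ a₂ ha hb =>
      simp only [mul_assoc, ha, hb, map_mul]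
      noncomm_ring
  | add a₁ a₂ ha hb =>
      simp only [add_mul, map_add, ha, hb]
      abel

private lemma koszul_contract_adjoin_zero (φ : Module.Dual K V) (s : Set V)
    (hs : ∀ v ∈ s, φ v = 0)
    (w : CliffordAlgebra (0 : QuadraticForm K V))
    (hw : w ∈ Algebra.adjoin K ((ι (0 : QuadraticForm K V)) '' s)) :
    contractLeft φ w = 0 := by
  induction hw using Algebra.adjoin_induction with
  | mem g hg =>
      obtain ⟨v, hv, rfl⟩ := hg
      rw [contractLeft_ι, hs v hv, map_zero]
  | algebraMap r => simp
  | add x y hx hy hx' hy' => rw [map_add, hx', hy', add_zero]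
  | mul x y hx hy hx' hy' => rw [koszul_contract_mul, hx', hy', zero_mul, mul_zero, add_zero]

private lemma koszul_involute_adjoin (s : Set V)
    (w : CliffordAlgebra (0 : QuadraticForm K V))
    (hw : w ∈ Algebra.adjoin K ((ι (0 : QuadraticForm K V)) '' s)) :
    involute w ∈ Algebra.adjoin K ((ι (0 : QuadraticForm K V)) '' s) := by
  induction hw using Algebra.adjoin_induction with
  | mem g hg =>
      obtain ⟨v, hv, rfl⟩ := hg
      rw [involute_ι]
      exact neg_mem (Algebra.subset_adjoin ⟨v, hv, rfl⟩)
  | algebraMap r => rw [AlgHom.commutes]; exact algebraMap_mem _ r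
  | add x y hx hy hx' hy' => rw [map_add]; exact add_mem hx' hy'
  | mul x y hx hy hx' hy' => rw [map_mul]; exact mul_mem hx' hy'

variable {ι' : Type*} (b : Module.Basis ι' K V)

private def koszulN (s : Finset ι') : Subalgebra K (CliffordAlgebra (0 : QuadraticForm K V)) :=
  Algebra.adjoin K ((ι (0 : QuadraticForm K V)) '' (b '' ↑s))

private lemma koszul_mem_N (x : CliffordAlgebra (0 : QuadraticForm K V)) :
    ∃ s : Finset ι', x ∈ koszulN b s := by
  induction x using CliffordAlgebra.induction with
  | algebraMap r => exact ⟨∅, Subalgebra.algebraMap_mem _ r⟩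
  | ι m =>
      refine ⟨(b.repr m).support, ?_⟩
      have hm : (ι (0 : QuadraticForm K V)) m
          = ∑ i ∈ (b.repr m).support, b.repr m i • (ι (0 : QuadraticForm K V)) (b i) := by
        conv_lhs => rw [← b.linearCombination_repr m]
        rw [Finsupp.linearCombination_apply, Finsupp.sum, map_sum]
        simp
      rw [hm]
      refine sum_mem fun i hi => Subalgebra.smul_mem _ ?_ _
      exact Algebra.subset_adjoin ⟨b i, ⟨i, hi, rfl⟩, rfl⟩
  | mul a c ha hc =>
      obtain ⟨s₁, hs₁⟩ := ha; obtain ⟨s₂, hs₂⟩ := hc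
      classical
      refine ⟨s₁ ∪ s₂, mul_mem
        (Algebra.adjoin_mono (Set.image_mono (Set.image_mono (by
          exact_mod_cast Finset.subset_union_left))) hs₁)
        (Algebra.adjoin_mono (Set.image_mono (Set.image_mono (by
          exact_mod_cast Finset.subset_union_right))) hs₂)⟩
  | add a c ha hc =>
      obtain ⟨s₁, hs₁⟩ := ha; obtain ⟨s₂, hs₂⟩ := hc
      classical
      refine ⟨s₁ ∪ s₂, add_mem
        (Algebra.adjoin_mono (Set.image_mono (Set.image_mono (by
          exact_mod_cast Finset.subset_union_left))) hs₁)
        (Algebra.adjoin_mono (Set.image_mono (Set.image_mono (by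
          exact_mod_cast Finset.subset_union_right))) hs₂)⟩

private lemma koszul_decomp [DecidableEq ι'] (a : ι') (s : Finset ι')
    (x : CliffordAlgebra (0 : QuadraticForm K V)) (hx : x ∈ koszulN b (insert a s)) :
    ∃ y z, y ∈ koszulN b s ∧ z ∈ koszulN b s ∧
      x = y + ι (0 : QuadraticForm K V) (b a) * z := by
  set e := ι (0 : QuadraticForm K V) (b a) with he
  induction hx using Algebra.adjoin_induction with
  | mem g hg =>
      obtain ⟨v, hv, rfl⟩ := hg
      obtain ⟨i, hi, rfl⟩ := hv
      rcases Finset.mem_insert.mp hi with rfl | hi'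
      · exact ⟨0, 1, zero_mem _, one_mem _, by rw [mul_one, zero_add]⟩
      · exact ⟨ι (0 : QuadraticForm K V) (b i), 0,
          Algebra.subset_adjoin ⟨b i, ⟨i, hi', rfl⟩, rfl⟩, zero_mem _,
          by rw [mul_zero, add_zero]⟩
  | algebraMap r =>
      exact ⟨algebraMap K _ r, 0, algebraMap_mem _ r, zero_mem _, by rw [mul_zero, add_zero]⟩
  | add x₁ x₂ hx₁ hx₂ h₁ h₂ =>
      obtain ⟨y₁, z₁, hy₁, hz₁, rfl⟩ := h₁
      obtain ⟨y₂, z₂, hy₂, hz₂, rfl⟩ := h₂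
      exact ⟨y₁ + y₂, z₁ + z₂, add_mem hy₁ hy₂, add_mem hz₁ hz₂, by noncomm_ring⟩
  | mul x₁ x₂ hx₁ hx₂ h₁ h₂ =>
      obtain ⟨y₁, z₁, hy₁, hz₁, rfl⟩ := h₁
      obtain ⟨y₂, z₂, hy₂, hz₂, rfl⟩ := h₂
      refine ⟨y₁ * y₂, involute y₁ * z₂ + z₁ * y₂,
        mul_mem hy₁ hy₂,
        add_mem (mul_mem (koszul_involute_adjoin _ _ hy₁) hz₂) (mul_mem hz₁ hy₂), ?_⟩
      have hee : e * e = 0 := by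
        rw [he, ι_sq_scalar]; simp
      have h1 : y₁ * e = e * involute y₁ := koszul_mul_ι _ _
      have h2 : z₁ * e = e * involute z₁ := koszul_mul_ι _ _
      have : (y₁ + e * z₁) * (y₂ + e * z₂)
          = y₁ * y₂ + y₁ * e * z₂ + e * z₁ * y₂ + e * z₁ * e * z₂ := by noncomm_ring
      rw [this, h1]
      have : e * z₁ * e = e * e * involute z₁ := by
        rw [mul_assoc, h2, ← mul_assoc]
      rw [this, hee]
      noncomm_ring

private lemma koszul_main (b : Module.Basis ι' K V) (s : Finset ι') :
    ∀ x : CliffordAlgebra (0 : QuadraticForm K V), x ∈ koszulN b s →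
      (∀ φ : Module.Dual K V, contractLeft φ x = 0) →
      x ∈ (algebraMap K (CliffordAlgebra (0 : QuadraticForm K V))).range := by
  classical
  induction s using Finset.induction_on with
  | empty =>
      intro x hs _
      have hbot : koszulN b (∅ : Finset ι') = ⊥ := by
        simp [koszulN, Algebra.adjoin_empty]
      rw [hbot, Algebra.mem_bot] at hs
      obtain ⟨r, hr⟩ := hs
      exact ⟨r, hr⟩
  | @insert a s ha ih =>
      intro x hs h
      obtain ⟨y, z, hy, hz, rfl⟩ := koszul_decomp b a s x hs
      have hcoord : ∀ v ∈ (b '' ↑s : Set V), b.coord a v = 0 := by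
        rintro _ ⟨i, hi, rfl⟩
        have hne : a ≠ i := fun hne => ha (hne ▸ hi)
        simp [Module.Basis.coord_apply, Module.Basis.repr_self_apply, hne.symm]
      have hz0 : contractLeft (b.coord a) z = 0 :=
        koszul_contract_adjoin_zero _ _ hcoord _ hz
      have hy0 : contractLeft (b.coord a) y = 0 :=
        koszul_contract_adjoin_zero _ _ hcoord _ hy
      have hx0 := h (b.coord a)
      rw [map_add, hy0, zero_add, contractLeft_ι_mul, hz0, mul_zero, sub_zero,
        Module.Basis.coord_apply, Module.Basis.repr_self_apply, if_pos rfl, one_smul] at hx0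
      simp only [hx0, mul_zero, add_zero] at h ⊢
      exact ih y hy h

end Aux

/-- **The Koszul derivation lemma** (Lemma 6.3 of the paper): if an element `x` of the
exterior algebra `Λ(V)` (realized as the Clifford algebra of the zero quadratic form on
`V`) satisfies `φ ⌟ x = 0` (left contraction) for every linear functional
`φ : V → K`, then `x` is a scalar, i.e. it lies in the image of the structure map
`K → Λ(V)`.  Hence the Koszul derivation `δ_V(x) = Σᵢ (eᵢ* ⌟ x) ⊗ eᵢ` has kernel
exactly `K·1` and is injective in positive degrees. -/
theorem exteriorAlgebra_contract_eq_zero_imp_scalar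
    (K : Type*) [Field K] (V : Type*) [AddCommGroup V] [Module K V]
    (x : CliffordAlgebra (0 : QuadraticForm K V))
    (h : ∀ φ : Module.Dual K V, CliffordAlgebra.contractLeft φ x = 0) :
    x ∈ (algebraMap K (CliffordAlgebra (0 : QuadraticForm K V))).range := by
  classical
  obtain ⟨s, hs⟩ := koszul_mem_N (Module.Basis.ofVectorSpace K V) x
  exact koszul_main (Module.Basis.ofVectorSpace K V) s x hs h
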